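/- In the 6-dimensional case, the algebras L(0,1,1,0) and L(0,1,0,0) are non-isomorphic, where L(0,1,1,0) has nonzero products [e₀,e₀]=e₂, [eᵢ,e₀]=e_{i+1} for 2≤i≤4, [e₀,e₁]=e₄+e₅, [e₂,e₁]=e₅, and L(0,1,0,0) has [e₀,e₀]=e₂, [eᵢ,e₀]=e_{i+1} for 2≤i≤4, [e₀,e₁]=e₄, [e₂,e₁]=e₅. -/

import Mathlib

/-- The bracket of the algebra `L(0,1,1,0)` in `SLeib₆`. -/
def brL0110 (x y : Fin 6 → ℂ) : Fin 6 → ℂ :=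
  ![0, 0,
    x 0 * y 0,
    x 2 * y 0,
    x 3 * y 0 + x 0 * y 1,
    x 4 * y 0 + x 0 * y 1 + x 2 * y 1]

/-- The bracket of the algebra `L(0,1,0,0)` in `SLeib₆`. -/
def brL0100 (x y : Fin 6 → ℂ) : Fin 6 → ℂ :=
  ![0, 0,
    x 0 * y 0,
    x 2 * y 0,
    x 3 * y 0 + x 0 * y 1,
    x 4 * y 0 + x 2 * y 1]

lemma br0 (x y : Fin 6 → ℂ) : brL0100 x y 0 = 0 := rfl
lemma br1 (x y : Fin 6 → ℂ) : brL0100 x y 1 = 0 := rfl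
lemma br2 (x y : Fin 6 → ℂ) : brL0100 x y 2 = x 0 * y 0 := rfl
lemma br3 (x y : Fin 6 → ℂ) : brL0100 x y 3 = x 2 * y 0 := rfl
lemma br4 (x y : Fin 6 → ℂ) : brL0100 x y 4 = x 3 * y 0 + x 0 * y 1 := rfl
lemma br5 (x y : Fin 6 → ℂ) : brL0100 x y 5 = x 4 * y 0 + x 2 * y 1 := rfl

/-- The algebras `L(0,1,1,0)` and `L(0,1,0,0)` are not isomorphic. -/
theorem L0110_not_isomorphic_L0100 :
    ¬ ∃ f : (Fin 6 → ℂ) ≃ₗ[ℂ] (Fin 6 → ℂ),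
        ∀ x y : Fin 6 → ℂ, f (brL0110 x y) = brL0100 (f x) (f y) := by
  rintro ⟨f, hf⟩
  set e0 : Fin 6 → ℂ := ![1,0,0,0,0,0] with he0
  set e1 : Fin 6 → ℂ := ![0,1,0,0,0,0] with he1
  set e2 : Fin 6 → ℂ := ![0,0,1,0,0,0] with he2
  set e3 : Fin 6 → ℂ := ![0,0,0,1,0,0] with he3
  set e4 : Fin 6 → ℂ := ![0,0,0,0,1,0] with he4
  set e5 : Fin 6 → ℂ := ![0,0,0,0,0,1] with he5
  have b00 : brL0110 e0 e0 = e2 := by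
    funext i; fin_cases i <;> norm_num [brL0110, he0, he2] <;> rfl
  have b20 : brL0110 e2 e0 = e3 := by
    funext i; fin_cases i <;> norm_num [brL0110, he0, he2, he3] <;> rfl
  have b30 : brL0110 e3 e0 = e4 := by
    funext i; fin_cases i <;> norm_num [brL0110, he0, he3, he4] <;> rfl
  have b40 : brL0110 e4 e0 = e5 := by
    funext i; fin_cases i <;> norm_num [brL0110, he0, he4, he5] <;> rfl
  have b01 : brL0110 e0 e1 = e4 + e5 := by
    funext i; fin_cases i <;> norm_num [brL0110, he0, he1, he4, he5] <;> rfl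
  set A : Fin 6 → ℂ := f e0 with hA
  set B : Fin 6 → ℂ := f e1 with hB
  set C : Fin 6 → ℂ := brL0100 A A with hCdef
  set D : Fin 6 → ℂ := brL0100 C A with hDdef
  set E : Fin 6 → ℂ := brL0100 D A with hEdef
  set F : Fin 6 → ℂ := brL0100 E A with hFdef
  have hC : f e2 = C := by rw [← b00, hf]
  have hD : f e3 = D := by rw [← b20, hf, hC]
  have hE : f e4 = E := by rw [← b30, hf, hD]
  have hF : f e5 = F := by rw [← b40, hf, hE]
  have hG : E + F = brL0100 A B := by
    rw [← hE, ← hF, ← map_add, ← b01, hf]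
  set a : ℂ := A 0 with ha
  -- component values
  have hC0 : C 0 = 0 := br0 _ _
  have hC2 : C 2 = a * a := br2 _ _
  have hC3 : C 3 = A 2 * a := br3 _ _
  have hD0 : D 0 = 0 := br0 _ _
  have hD2 : D 2 = 0 := by rw [hDdef, br2, hC0, zero_mul]
  have hD3 : D 3 = a * a * a := by rw [hDdef, br3, hC2]
  have hD4 : D 4 = C 3 * a + C 0 * A 1 := br4 _ _
  have hE0 : E 0 = 0 := br0 _ _
  have hE2 : E 2 = 0 := by rw [hEdef, br2, hD0, zero_mul]
  have hE3 : E 3 = 0 := by rw [hEdef, br3, hD2, zero_mul]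
  have hE4 : E 4 = a * a * a * a := by rw [hEdef, br4, hD3, hD0, zero_mul, add_zero]
  have hE5 : E 5 = D 4 * a := by rw [hEdef, br5, hD2, zero_mul, add_zero]
  have hF2 : F 2 = 0 := by rw [hFdef, br2, hE0, zero_mul]
  have hF4 : F 4 = 0 := by rw [hFdef, br4, hE3, hE0, zero_mul, zero_mul, add_zero]
  have hF5 : F 5 = a * a * a * a * a := by
    rw [hFdef, br5, hE4, hE2, zero_mul, add_zero]
  -- equations from [e0,e1] = e4 + e5
  have h2 : a * B 0 = 0 := by
    have := congrFun hG 2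
    rw [Pi.add_apply, hE2, hF2, br2] at this
    linear_combination -this
  have h4 : a * a * a * a = A 3 * B 0 + a * B 1 := by
    have := congrFun hG 4
    rwa [Pi.add_apply, hE4, hF4, br4, add_zero] at this
  have h5 : E 5 + a * a * a * a * a = A 4 * B 0 + A 2 * B 1 := by
    have := congrFun hG 5
    rwa [Pi.add_apply, hF5, br5] at this
  have ha0 : a = 0 := by
    by_contra h
    have hB0 : B 0 = 0 := by
      rcases mul_eq_zero.mp h2 with h' | h'
      · exact absurd h' h
      · exact h'
    have hB1 : B 1 = a * a * a := by
      have h4' : a * B 1 = a * (a * a * a) := by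
        rw [hB0] at h4; linear_combination -h4
      exact mul_left_cancel₀ h h4'
    have hE5' : E 5 = A 2 * (a * a * a) := by
      rw [hE5, hD4, hC3, hC0, zero_mul, add_zero]; ring
    rw [hB0, hB1, hE5'] at h5
    have : a * a * a * a * a = 0 := by linear_combination h5
    exact h (pow_eq_zero_iff (n := 5) (by norm_num) |>.mp (by linear_combination this))
  have hFe5 : f e5 = 0 := by
    rw [hF]
    funext i; fin_cases i
    · exact br0 _ _
    · exact br1 _ _
    · exact hF2
    · show F 3 = 0
      rw [hFdef, br3, hE2, zero_mul]
    · exact hF4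
    · show F 5 = 0
      rw [hF5, ha0]; ring
  have he5z : e5 = 0 := f.injective (by rw [hFe5, map_zero])
  have h1 : (![0,0,0,0,0,1] : Fin 6 → ℂ) 5 = 1 := rfl
  have := congrFun he5z 5
  rw [he5, h1] at this
  exact one_ne_zero this
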